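/- Let 𝒢_n be a simple, verbose ψ-reduction grammar. Then for each production G_n → χ[σ_1]⋯[σ_w] in 𝒢_n whose right-hand side has closure width w, either χ = N (the non-terminal for de Bruijn indices) or χ = f(α_1,…,α_m) for some non-closure function symbol f of arity m. -/
import Mathlib


mutual
/-- λυ-terms in de Bruijn notation, with explicit closures. -/
inductive LTerm : Type
  | idx : Nat → LTerm
  | lam : LTerm → LTerm
  | app : LTerm → LTerm → LTerm
  | clos : LTerm → LSub → LTerm
  deriving DecidableEq

/-- explicit λυ-substitutions. -/
inductive LSub : Type
  | slash : LTerm → LSub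
  | lift : LSub → LSub
  | shift : LSub
  deriving DecidableEq
end

mutual
/-- natural size of a λυ-term: the number of constructors (|idx n| = n+1). -/
def LTerm.size : LTerm → Nat
  | .idx n => n + 1
  | .lam a => 1 + a.size
  | .app a b => 1 + a.size + b.size
  | .clos a s => 1 + a.size + s.size

/-- natural size of a substitution. -/
def LSub.size : LSub → Nat
  | .slash a => 1 + a.size
  | .lift s => 1 + s.size
  | .shift => 1
end

/-- a λυ-term is pure if it contains no closure; pure terms are exactly the ψ-normal forms. -/
def LTerm.IsPure : LTerm → Prop
  | .idx _ => True
  | .lam a => a.IsPure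
  | .app a b => a.IsPure ∧ b.IsPure
  | .clos _ _ => False

/-- one normal-order (leftmost-outermost) ψ-reduction step. -/
inductive NStep : LTerm → LTerm → Prop
  /-- (App) (ab)[s] → a[s](b[s]) -/
  | appS (a b : LTerm) (s : LSub) :
      NStep (.clos (.app a b) s) (.app (.clos a s) (.clos b s))
  /-- (Lambda) (λa)[s] → λ(a[⇑(s)]) -/
  | lamS (a : LTerm) (s : LSub) :
      NStep (.clos (.lam a) s) (.lam (.clos a (.lift s)))
  /-- (FVar) 0[a/] → a -/
  | fvar (a : LTerm) : NStep (.clos (.idx 0) (.slash a)) a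
  /-- (RVar) (S n)[a/] → n -/
  | rvar (n : Nat) (a : LTerm) : NStep (.clos (.idx (n+1)) (.slash a)) (.idx n)
  /-- (FVarLift) 0[⇑(s)] → 0 -/
  | fvarLift (s : LSub) : NStep (.clos (.idx 0) (.lift s)) (.idx 0)
  /-- (RVarLift) (S n)[⇑(s)] → n[s][↑] -/
  | rvarLift (n : Nat) (s : LSub) :
      NStep (.clos (.idx (n+1)) (.lift s)) (.clos (.clos (.idx n) s) .shift)
  /-- (VarShift) n[↑] → S n -/
  | varShift (n : Nat) : NStep (.clos (.idx n) .shift) (.idx (n+1))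
  /-- reduce under an abstraction -/
  | lamCong {a a' : LTerm} : NStep a a' → NStep (.lam a) (.lam a')
  /-- reduce in the left part of an application -/
  | appLeft {a a' : LTerm} (b : LTerm) : NStep a a' → NStep (.app a b) (.app a' b)
  /-- reduce in the right part of an application, provided the left part is normal -/
  | appRight {b b' : LTerm} (a : LTerm) :
      a.IsPure → NStep b b' → NStep (.app a b) (.app a b')
  /-- reduce in the body of a closure, provided the closure is not itself a ψ-redex,
      i.e. its body is again a closure -/
  | closCong {t t' : LTerm} (s : LSub) :
      (∃ u v, t = LTerm.clos u v) → NStep t t' → NStep (.clos t s) (.clos t' s)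

/-- `NormIn t k` : `t` reaches its ψ-normal form in exactly `k` normal-order
ψ-reduction steps (written t ↓_k). -/
inductive NormIn : LTerm → Nat → Prop
  | base {t : LTerm} : t.IsPure → NormIn t 0
  | step {t t' : LTerm} {k : Nat} : NStep t t' → NormIn t' k → NormIn t (k+1)

/-! ## Regular tree grammars over the λυ signature -/

/-- terms over the ranked alphabet of λυ (terminal symbols 0, S, λ, application,
closure, slash, lift, shift) with variables (non-terminals) in `V`.
Ground terms are `GTerm Empty`. -/
inductive GTerm (V : Type) : Type
  | var : V → GTerm V
  | zero : GTerm V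
  | succ : GTerm V → GTerm V
  | lam : GTerm V → GTerm V
  | app : GTerm V → GTerm V → GTerm V
  | clos : GTerm V → GTerm V → GTerm V
  | slash : GTerm V → GTerm V
  | lift : GTerm V → GTerm V
  | shift : GTerm V
  deriving DecidableEq

/-- `Gen P α t` : the ground term `t` is derivable from the term `α` in the
regular tree grammar with production function `P`. -/
inductive Gen {V : Type} (P : V → Set (GTerm V)) : GTerm V → GTerm Empty → Prop
  | var {X : V} {γ : GTerm V} {t : GTerm Empty} :
      γ ∈ P X → Gen P γ t → Gen P (.var X) t
  | zero : Gen P .zero .zero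
  | succ {a t} : Gen P a t → Gen P (.succ a) (.succ t)
  | lam {a t} : Gen P a t → Gen P (.lam a) (.lam t)
  | app {a b t u} : Gen P a t → Gen P b u → Gen P (.app a b) (.app t u)
  | clos {a b t u} : Gen P a t → Gen P b u → Gen P (.clos a b) (.clos t u)
  | slash {a t} : Gen P a t → Gen P (.slash a) (.slash t)
  | lift {a t} : Gen P a t → Gen P (.lift a) (.lift t)
  | shift : Gen P .shift .shift

/-- the language generated by a term `α` in the grammar with productions `P`. -/
def Lang {V : Type} (P : V → Set (GTerm V)) (α : GTerm V) : Set (GTerm Empty) :=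
  {t | Gen P α t}

/-- derivations (parse trees) of a ground term from a term `α`; a grammar is
unambiguous when such derivations are unique. -/
inductive Parse {V : Type} (P : V → Set (GTerm V)) : GTerm V → GTerm Empty → Type
  | var {X : V} {γ : GTerm V} {t : GTerm Empty} :
      γ ∈ P X → Parse P γ t → Parse P (.var X) t
  | zero : Parse P .zero .zero
  | succ {a t} : Parse P a t → Parse P (.succ a) (.succ t)
  | lam {a t} : Parse P a t → Parse P (.lam a) (.lam t)
  | app {a b t u} : Parse P a t → Parse P b u → Parse P (.app a b) (.app t u)
  | clos {a b t u} : Parse P a t → Parse P b u → Parse P (.clos a b) (.clos t u)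
  | slash {a t} : Parse P a t → Parse P (.slash a) (.slash t)
  | lift {a t} : Parse P a t → Parse P (.lift a) (.lift t)
  | shift : Parse P .shift .shift

/-- a non-terminal `X` is unambiguous if every ground term admits at most one
derivation sequence (equivalently, parse tree) from `X`. -/
def Unambiguous {V : Type} (P : V → Set (GTerm V)) (X : V) : Prop :=
  ∀ t : GTerm Empty, Subsingleton (Parse P (.var X) t)

/-- `Occurs X α` : the non-terminal `X` occurs in the term `α`. -/
def Occurs {V : Type} (X : V) : GTerm V → Prop
  | .var Y => X = Y
  | .zero => False
  | .succ a => Occurs X a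
  | .lam a => Occurs X a
  | .app a b => Occurs X a ∨ Occurs X b
  | .clos a b => Occurs X a ∨ Occurs X b
  | .slash a => Occurs X a
  | .lift a => Occurs X a
  | .shift => False

/-- the head of a term `χ[σ_1]⋯[σ_w]` of closure width `w`, namely `χ`. -/
def headOf {V : Type} : GTerm V → GTerm V
  | .clos a _ => headOf a
  | t => t

/-- the closure width of a term: the largest `w` such that the term has the
form `χ[σ_1]⋯[σ_w]`. -/
def closWidth {V : Type} : GTerm V → Nat
  | .clos a _ => closWidth a + 1
  | _ => 0

/-- a regular tree grammar over the λυ terminal alphabet, with non-terminals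
`V`, axiom `ax` and a finite set of productions for each non-terminal. -/
structure RTG (V : Type) where
  ax : V
  prods : V → Set (GTerm V)
  prods_fin : ∀ X, (prods X).Finite

/-- non-terminal symbols of the ψ-reduction grammar 𝒢_n : the standard
non-terminals T, S, N of the grammar Λ of λυ-terms, plus G_0, …, G_n. -/
inductive NT (n : Nat) : Type
  | T : NT n
  | S : NT n
  | N : NT n
  | G : Fin (n+1) → NT n
  deriving DecidableEq

/-- the productions of the standard regular tree grammar Λ of λυ-terms:
T → N | λT | T T | T[S],  S → T/ | ⇑(S) | ↑,  N → 0 | S N. -/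
def lamProds {n : Nat} : NT n → Set (GTerm (NT n))
  | .T => {GTerm.var (NT.N), GTerm.lam (.var .T), GTerm.app (.var .T) (.var .T),
           GTerm.clos (.var .T) (.var .S)}
  | .S => {GTerm.slash (.var .T), GTerm.lift (.var .S), GTerm.shift}
  | .N => {GTerm.zero, GTerm.succ (.var .N)}
  | .G _ => ∅

/-- encoding of de Bruijn indices as ground terms. -/
def encIdx : Nat → GTerm Empty
  | 0 => .zero
  | n+1 => .succ (encIdx n)

mutual
/-- encoding of λυ-terms as ground terms over the λυ alphabet. -/
def encT : LTerm → GTerm Empty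
  | .idx n => encIdx n
  | .lam a => .lam (encT a)
  | .app a b => .app (encT a) (encT b)
  | .clos a s => .clos (encT a) (encS s)

/-- encoding of λυ-substitutions as ground terms over the λυ alphabet. -/
def encS : LSub → GTerm Empty
  | .slash a => .slash (encT a)
  | .lift s => .lift (encS s)
  | .shift => .shift
end

/-- `IsRG n G` : `G` is a ψ-reduction grammar 𝒢_n : a regular tree grammar
over the λυ alphabet with non-terminals T, S, N, G_0, …, G_n, whose axiom is
G_n, whose productions include those of the grammar Λ of λυ-terms, and such
that each G_k is unambiguous and generates exactly the (encodings of) λυ-terms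
ψ-normalising in k normal-order ψ-reduction steps. -/
structure IsRG (n : Nat) (G : RTG (NT n)) : Prop where
  ax_eq : G.ax = NT.G (Fin.last n)
  lambda_sub : ∀ X : NT n, lamProds X ⊆ G.prods X
  unamb : ∀ k : Fin (n+1), Unambiguous G.prods (NT.G k)
  lang : ∀ k : Fin (n+1),
    Lang G.prods (.var (NT.G k)) = {g | ∃ t : LTerm, NormIn t k ∧ encT t = g}

/-- `IsSimple n G` : the ψ-reduction grammar is simple: every self-referencing
production is a production of Λ or has one of the forms
G_k → λG_k | G_0 G_k | G_k G_0, and every regular (non-self-referencing)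
production G_k → α references only the non-terminals T, S, N, G_0, …, G_{k−1}. -/
structure IsSimple (n : Nat) (G : RTG (NT n)) : Prop where
  selfref : ∀ (X : NT n) (α : GTerm (NT n)), α ∈ G.prods X → Occurs X α →
    α ∈ lamProds X ∨
      ∃ k : Fin (n+1), X = NT.G k ∧
        (α = .lam (.var X) ∨ α = .app (.var (NT.G 0)) (.var X) ∨
          α = .app (.var X) (.var (NT.G 0)))
  regular : ∀ (k : Fin (n+1)) (α : GTerm (NT n)),
    α ∈ G.prods (NT.G k) → ¬ Occurs (NT.G k) α →
      ∀ Y : NT n, Occurs Y α →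
        Y = NT.T ∨ Y = NT.S ∨ Y = NT.N ∨ ∃ j : Fin (n+1), Y = NT.G j ∧ (j : ℕ) < (k : ℕ)

/-- `IsVerbose G` : no production has the form X → G_k[σ_1]⋯[σ_w]. -/
def IsVerbose {n : Nat} (G : RTG (NT n)) : Prop :=
  ∀ (X : NT n) (α : GTerm (NT n)), α ∈ G.prods X →
    ∀ k : Fin (n+1), headOf α ≠ .var (NT.G k)

/-! ## Auxiliary lemmas -/

/-- the ground term `(idx j)[↑]^r`. -/
def dT (j : Nat) : Nat → LTerm
  | 0 => .idx j
  | r+1 => .clos (dT j r) .shift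

theorem dT_step : ∀ (r j : Nat), NStep (dT j (r+1)) (dT (j+1) r)
  | 0, j => NStep.varShift j
  | r+1, j => NStep.closCong _ ⟨dT j r, .shift, rfl⟩ (dT_step r j)

theorem normIn_dT : ∀ (r j : Nat), NormIn (dT j r) r
  | 0, _ => NormIn.base trivial
  | r+1, j => NormIn.step (dT_step r j) (normIn_dT r (j+1))

theorem noStepPure {t t' : LTerm} (h : NStep t t') : ¬ t.IsPure := by
  induction h with
  | lamCong _ ih => exact ih
  | appLeft _ _ ih => exact fun hp => ih hp.1
  | appRight _ _ _ ih => exact fun hp => ih hp.2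
  | _ => exact fun hp => hp

theorem nstep_det {t u v : LTerm} (h1 : NStep t u) (h2 : NStep t v) : u = v := by
  induction h1 generalizing v with
  | appS a b s =>
    cases h2 with
    | appS => rfl
    | closCong _ hex _ => obtain ⟨x, y, hxy⟩ := hex; cases hxy
  | lamS a s =>
    cases h2 with
    | lamS => rfl
    | closCong _ hex _ => obtain ⟨x, y, hxy⟩ := hex; cases hxy
  | fvar a =>
    cases h2 with
    | fvar => rfl
    | closCong _ hex _ => obtain ⟨x, y, hxy⟩ := hex; cases hxy
  | rvar n a =>
    cases h2 with
    | rvar => rfl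
    | closCong _ hex _ => obtain ⟨x, y, hxy⟩ := hex; cases hxy
  | fvarLift s =>
    cases h2 with
    | fvarLift => rfl
    | closCong _ hex _ => obtain ⟨x, y, hxy⟩ := hex; cases hxy
  | rvarLift n s =>
    cases h2 with
    | rvarLift => rfl
    | closCong _ hex _ => obtain ⟨x, y, hxy⟩ := hex; cases hxy
  | varShift n =>
    cases h2 with
    | varShift => rfl
    | closCong _ hex _ => obtain ⟨x, y, hxy⟩ := hex; cases hxy
  | lamCong _ ih =>
    cases h2 with
    | lamCong h2' => rw [ih h2']
  | appLeft b h ih =>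
    cases h2 with
    | appLeft _ h2' => rw [ih h2']
    | appRight _ hp _ => exact absurd hp (noStepPure h)
  | appRight a hp h ih =>
    cases h2 with
    | appLeft _ h2' => exact absurd hp (noStepPure h2')
    | appRight _ _ h2' => rw [ih h2']
  | closCong s hex h ih =>
    obtain ⟨x, y, rfl⟩ := hex
    cases h2 with
    | closCong _ _ h2' => rw [ih h2']

/-- chains of closures over a fixed head, on λυ-terms. -/
inductive LChain (u : LTerm) : LTerm → Prop
  | refl : LChain u u
  | cons (a : LTerm) (s : LSub) : LChain u a → LChain u (.clos a s)

/-- chains of closures over a fixed head, on ground terms. -/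
inductive GChain (g : GTerm Empty) : GTerm Empty → Prop
  | refl : GChain g g
  | cons (a b : GTerm Empty) : GChain g a → GChain g (.clos a b)

theorem lchain_clos {u a : LTerm} (h : LChain u a) (hc : ∃ x y, u = LTerm.clos x y) :
    ∃ x y, a = LTerm.clos x y := by
  cases h with
  | refl => exact hc
  | cons a s _ => exact ⟨a, s, rfl⟩

theorem lchain_step {u u' t : LTerm} (hst : NStep u u') (hc : ∃ x y, u = LTerm.clos x y)
    (h : LChain u t) : ∃ t', NStep t t' ∧ LChain u' t' := by
  induction h with
  | refl => exact ⟨u', hst, LChain.refl⟩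
  | cons a s ha ih =>
    obtain ⟨t', h1, h2⟩ := ih
    exact ⟨.clos t' s, NStep.closCong s (lchain_clos ha hc) h1, LChain.cons _ s h2⟩

theorem lchain_bound : ∀ (r j : Nat) (t : LTerm) (k : Nat),
    LChain (dT j r) t → NormIn t k → r ≤ k := by
  intro r
  induction r with
  | zero => intro _ _ _ _ _; exact Nat.zero_le _
  | succ r ih =>
    intro j t k hch hn
    obtain ⟨t', hst, hch'⟩ :=
      lchain_step (dT_step r j) ⟨dT j r, .shift, rfl⟩ hch
    cases hn with
    | base hp => exact absurd hp (noStepPure hst)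
    | step hst2 hn' =>
      have := nstep_det hst hst2
      subst this
      exact Nat.succ_le_succ (ih (j+1) t' _ hch' hn')

theorem encIdx_inj : ∀ m k : Nat, encIdx m = encIdx k → m = k := by
  intro m
  induction m with
  | zero => intro k h; cases k with
    | zero => rfl
    | succ k => simp [encIdx] at h
  | succ m ih => intro k h; cases k with
    | zero => simp [encIdx] at h
    | succ k => simp [encIdx] at h; rw [ih k h]

theorem encT_not_clos {t : LTerm} {a b : GTerm Empty}
    (hne : ∀ u s, t ≠ LTerm.clos u s) : encT t ≠ .clos a b := by
  cases t with
  | idx m => cases m <;> simp [encT, encIdx]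
  | lam _ => simp [encT]
  | app _ _ => simp [encT]
  | clos u s => exact absurd rfl (hne u s)

theorem encT_clos {t : LTerm} {a b : GTerm Empty} (h : encT t = .clos a b) :
    ∃ u s, t = LTerm.clos u s ∧ encT u = a ∧ encS s = b := by
  cases t with
  | idx m => cases m <;> simp [encT, encIdx] at h
  | lam _ => simp [encT] at h
  | app _ _ => simp [encT] at h
  | clos u s =>
    simp only [encT] at h
    exact ⟨u, s, rfl, (GTerm.clos.injEq _ _ _ _ ▸ h).1, (GTerm.clos.injEq _ _ _ _ ▸ h).2⟩

theorem enc_dT : ∀ (r j : Nat) (u : LTerm), encT u = encT (dT j r) → u = dT j r := by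
  intro r
  induction r with
  | zero =>
    intro j u h
    cases u with
    | idx m => simp [dT, encT] at h ⊢; exact encIdx_inj m j h
    | lam _ => cases j <;> simp [dT, encT, encIdx] at h
    | app _ _ => cases j <;> simp [dT, encT, encIdx] at h
    | clos _ _ => cases j <;> simp [dT, encT, encIdx] at h
  | succ r ih =>
    intro j u h
    have h' : encT u = .clos (encT (dT j r)) (encS .shift) := h
    obtain ⟨a, s, rfl, ha, hs⟩ := encT_clos h'
    have : a = dT j r := ih j a ha
    subst this
    cases s with
    | slash _ => simp [encS] at hs
    | lift _ => simp [encS] at hs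
    | shift => rfl

theorem chainDecode {g0 g : GTerm Empty} (h : GChain g0 g) :
    ∀ t : LTerm, encT t = g → ∃ u, LChain u t ∧ encT u = g0 := by
  induction h with
  | refl => exact fun t ht => ⟨t, LChain.refl, ht⟩
  | cons a b _ ih =>
    intro t ht
    obtain ⟨u, s, rfl, hu, _⟩ := encT_clos ht
    obtain ⟨w, hw1, hw2⟩ := ih u hu
    exact ⟨w, LChain.cons u s hw1, hw2⟩

theorem no_shift_chain {g : GTerm Empty} (h : GChain .shift g) :
    ∀ t : LTerm, encT t ≠ g := by
  intro t ht
  obtain ⟨u, _, hu⟩ := chainDecode h t ht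
  cases u with
  | idx m => cases m <;> simp [encT, encIdx] at hu
  | lam _ => simp [encT] at hu
  | app _ _ => simp [encT] at hu
  | clos _ _ => simp [encT] at hu

theorem headOf_ne_clos {V : Type} : ∀ (γ a b : GTerm V), headOf γ ≠ .clos a b := by
  intro γ
  induction γ with
  | clos x y ihx _ => intro a b; simpa [headOf] using ihx a b
  | var v => intro a b; simp [headOf]
  | zero => intro a b; simp [headOf]
  | succ _ _ => intro a b; simp [headOf]
  | lam _ _ => intro a b; simp [headOf]
  | app _ _ _ _ => intro a b; simp [headOf]
  | slash _ _ => intro a b; simp [headOf]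
  | lift _ _ => intro a b; simp [headOf]
  | shift => intro a b; simp [headOf]

section Grammar

variable {n : Nat} {P : NT n → Set (GTerm (NT n))}

theorem genN (hl : ∀ X, lamProds X ⊆ P X) : ∀ m : Nat, Gen P (.var .N) (encIdx m) := by
  intro m
  induction m with
  | zero => exact Gen.var (hl .N (by simp [lamProds])) Gen.zero
  | succ m ih => exact Gen.var (hl .N (by simp [lamProds])) (Gen.succ ih)

mutual
theorem genT (hl : ∀ X, lamProds X ⊆ P X) : ∀ t : LTerm, Gen P (.var .T) (encT t)
  | .idx m => Gen.var (hl .T (by simp [lamProds])) (genN hl m)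
  | .lam a => Gen.var (hl .T (by simp [lamProds])) (Gen.lam (genT hl a))
  | .app a b => Gen.var (hl .T (by simp [lamProds])) (Gen.app (genT hl a) (genT hl b))
  | .clos a s => Gen.var (hl .T (by simp [lamProds])) (Gen.clos (genT hl a) (genS hl s))

theorem genS (hl : ∀ X, lamProds X ⊆ P X) : ∀ s : LSub, Gen P (.var .S) (encS s)
  | .slash a => Gen.var (hl .S (by simp [lamProds])) (Gen.slash (genT hl a))
  | .lift s => Gen.var (hl .S (by simp [lamProds])) (Gen.lift (genS hl s))
  | .shift => Gen.var (hl .S (by simp [lamProds])) Gen.shift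
end

theorem chainGen (inh : ∀ δ : GTerm (NT n), ∃ d, Gen P δ d) :
    ∀ (γ : GTerm (NT n)) (g0 : GTerm Empty), Gen P (headOf γ) g0 →
      ∃ g, Gen P γ g ∧ GChain g0 g := by
  intro γ
  induction γ with
  | clos a b iha _ =>
    intro g0 h
    obtain ⟨ga, hga, hch⟩ := iha g0 h
    obtain ⟨gb, hgb⟩ := inh b
    exact ⟨.clos ga gb, Gen.clos hga hgb, GChain.cons _ _ hch⟩
  | var v => exact fun g0 h => ⟨g0, h, GChain.refl⟩
  | zero => exact fun g0 h => ⟨g0, h, GChain.refl⟩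
  | succ _ _ => exact fun g0 h => ⟨g0, h, GChain.refl⟩
  | lam _ _ => exact fun g0 h => ⟨g0, h, GChain.refl⟩
  | app _ _ _ _ => exact fun g0 h => ⟨g0, h, GChain.refl⟩
  | slash _ _ => exact fun g0 h => ⟨g0, h, GChain.refl⟩
  | lift _ _ => exact fun g0 h => ⟨g0, h, GChain.refl⟩
  | shift => exact fun g0 h => ⟨g0, h, GChain.refl⟩

end Grammar

theorem rtg_inhab {n : Nat} (G : RTG (NT n)) (hRG : IsRG n G) :
    ∀ δ : GTerm (NT n), ∃ d, Gen G.prods δ d := by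
  have hl := hRG.lambda_sub
  intro δ
  induction δ with
  | var X =>
    cases X with
    | T => exact ⟨_, genT hl (.idx 0)⟩
    | S => exact ⟨_, genS hl .shift⟩
    | N => exact ⟨_, genN hl 0⟩
    | G k =>
      have : encT (dT 0 k) ∈ Lang G.prods (.var (NT.G k)) := by
        rw [hRG.lang k]
        exact ⟨dT 0 k, normIn_dT k 0, rfl⟩
      exact ⟨_, this⟩
  | zero => exact ⟨.zero, Gen.zero⟩
  | succ _ ih => obtain ⟨d, hd⟩ := ih; exact ⟨.succ d, Gen.succ hd⟩
  | lam _ ih => obtain ⟨d, hd⟩ := ih; exact ⟨.lam d, Gen.lam hd⟩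
  | app _ _ iha ihb =>
    obtain ⟨d, hd⟩ := iha; obtain ⟨e, he⟩ := ihb
    exact ⟨.app d e, Gen.app hd he⟩
  | clos _ _ iha ihb =>
    obtain ⟨d, hd⟩ := iha; obtain ⟨e, he⟩ := ihb
    exact ⟨.clos d e, Gen.clos hd he⟩
  | slash _ ih => obtain ⟨d, hd⟩ := ih; exact ⟨.slash d, Gen.slash hd⟩
  | lift _ ih => obtain ⟨d, hd⟩ := ih; exact ⟨.lift d, Gen.lift hd⟩
  | shift => exact ⟨.shift, Gen.shift⟩
/-- Let 𝒢_n be a simple, verbose ψ-reduction grammar. Then for each production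
G_n → χ[σ_1]⋯[σ_w] whose right-hand side has closure width w, the head χ is
either the non-terminal N for de Bruijn indices, or is built from a
non-closure function symbol (in particular it is not a non-terminal). -/
theorem head_of_axiom_production (n : Nat) (G : RTG (NT n))
    (hRG : IsRG n G) (hSimple : IsSimple n G) (hVerbose : IsVerbose G)
    (γ : GTerm (NT n)) (hγ : γ ∈ G.prods (NT.G (Fin.last n))) :
    headOf γ = .var NT.N ∨
      ((∀ Y : NT n, headOf γ ≠ .var Y) ∧ ∀ a b : GTerm (NT n), headOf γ ≠ .clos a b) := by
  have key : ∀ Y : NT n, headOf γ = .var Y → Y = NT.N := by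
    intro Y hY
    cases Y with
    | N => rfl
    | G k => exact absurd hY (hVerbose _ γ hγ k)
    | T =>
      exfalso
      have hl := hRG.lambda_sub
      have hg0 : Gen G.prods (headOf γ) (encT (dT 0 (n+1))) := by
        rw [hY]; exact genT hl (dT 0 (n+1))
      obtain ⟨g, hgen, hch⟩ := chainGen (rtg_inhab G hRG) γ _ hg0
      have hmem : g ∈ Lang G.prods (.var (NT.G (Fin.last n))) := Gen.var hγ hgen
      rw [hRG.lang (Fin.last n)] at hmem
      obtain ⟨t, hn, he⟩ := hmem
      obtain ⟨u, hlc, hequ⟩ := chainDecode hch t he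
      have hu : u = dT 0 (n+1) := enc_dT (n+1) 0 u hequ
      subst hu
      have hb : n + 1 ≤ ((Fin.last n : Fin (n+1)) : ℕ) :=
        lchain_bound (n+1) 0 t _ hlc hn
      rw [Fin.val_last] at hb
      omega
    | S =>
      exfalso
      have hg0 : Gen G.prods (headOf γ) (GTerm.shift) := by
        rw [hY]; exact Gen.var (hRG.lambda_sub .S (by simp [lamProds])) Gen.shift
      obtain ⟨g, hgen, hch⟩ := chainGen (rtg_inhab G hRG) γ _ hg0
      have hmem : g ∈ Lang G.prods (.var (NT.G (Fin.last n))) := Gen.var hγ hgen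
      rw [hRG.lang (Fin.last n)] at hmem
      obtain ⟨t, _, he⟩ := hmem
      exact no_shift_chain hch t he
  by_cases hv : ∃ Y : NT n, headOf γ = .var Y
  · obtain ⟨Y, hY⟩ := hv
    left; rw [hY, key Y hY]
  · right
    exact ⟨fun Y h => hv ⟨Y, h⟩, fun a b => headOf_ne_clos γ a b⟩
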